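/- Let m > 1 be a real number and l a natural number with l < m − 1. Let ω be a complex number with Im ω > 0, write ω = |ω|e^{iθ} with θ ∈ (0, π), and set q_ω = |ω|^{1/m} e^{iθ/m} and μ = e^{iπ/m}. Then the integral L_{m,l}(ω) = ∫_{-∞}^{∞} k^l / (ω − sign(k)·|k|^m) dk converges absolutely and equals (2πi/m) · q_ω^{l+1−m} / ((−1)^l μ^{l+1} − 1). -/

import Mathlib

open MeasureTheory Complex Filter Topology

/-- `L_{m,l}(ω) = ∫_{-∞}^{∞} k^l / (ω − sign(k)·|k|^m) dk` for the antisymmetric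
dispersion `ε(k) = sign(k)|k|^m`. -/
noncomputable def Lint (m : ℝ) (l : ℕ) (ω : ℂ) : ℂ :=
  ∫ k : ℝ, (k : ℂ) ^ l / (ω - ((Real.sign k * |k| ^ m : ℝ) : ℂ))

lemma betaC (s : ℝ) (h0 : 0 < s) (h1 : s < 1) :
    Complex.betaIntegral s (1 - s) = ((Real.pi / Real.sin (Real.pi * s) : ℝ) : ℂ) := by
  have h := Complex.Gamma_mul_Gamma_eq_betaIntegral (s := (s:ℂ)) (t := 1 - (s:ℂ))
    (by simpa using h0) (by simp [Complex.sub_re]; linarith)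
  rw [Complex.Gamma_mul_Gamma_one_sub] at h
  have h2 : (s:ℂ) + (1 - (s:ℂ)) = 1 := by ring
  rw [h2, Complex.Gamma_one, one_mul] at h
  rw [← h]
  push_cast
  rfl

lemma beta01 (s : ℝ) (h0 : 0 < s) (h1 : s < 1) :
    ∫ x in Set.Ioo (0:ℝ) 1, x ^ (s - 1) * (1 - x) ^ (-s) = Real.pi / Real.sin (Real.pi * s) := by
  have key : Complex.betaIntegral s (1 - s)
      = ((∫ x in Set.Ioo (0:ℝ) 1, x ^ (s - 1) * (1 - x) ^ (-s) : ℝ) : ℂ) := by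
    rw [Complex.betaIntegral]
    have hcong : ∀ x ∈ Set.uIcc (0:ℝ) 1,
        ((x:ℂ)) ^ ((s:ℂ) - 1) * (1 - (x:ℂ)) ^ (1 - (s:ℂ) - 1)
          = ((x ^ (s - 1) * (1 - x) ^ (-s) : ℝ) : ℂ) := by
      intro x hx
      rw [Set.uIcc_of_le (by norm_num : (0:ℝ) ≤ 1)] at hx
      obtain ⟨hx0, hx1⟩ := hx
      rw [Complex.ofReal_mul, Complex.ofReal_cpow hx0, Complex.ofReal_cpow (by linarith)]
      push_cast
      norm_num
    rw [intervalIntegral.integral_congr hcong, intervalIntegral.integral_ofReal,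
      intervalIntegral.integral_of_le (by norm_num : (0:ℝ) ≤ 1), integral_Ioc_eq_integral_Ioo]
  have h2 := key.symm.trans (betaC s h0 h1)
  exact_mod_cast h2

lemma mellin_one_add (s : ℝ) (h0 : 0 < s) (h1 : s < 1) :
    ∫ u in Set.Ioi (0:ℝ), u ^ (s - 1) / (1 + u) = Real.pi / Real.sin (Real.pi * s) := by
  have himg : (fun x : ℝ => x / (1 - x)) '' Set.Ioo 0 1 = Set.Ioi 0 := by
    ext y
    constructor
    · rintro ⟨x, ⟨hx0, hx1⟩, rfl⟩
      exact div_pos hx0 (by linarith)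
    · intro hy
      refine ⟨y / (1 + y), ⟨div_pos hy (by linarith [Set.mem_Ioi.mp hy]), ?_⟩, ?_⟩
      · rw [div_lt_one (by linarith [Set.mem_Ioi.mp hy])]; linarith [Set.mem_Ioi.mp hy]
      · have h1y : (0:ℝ) < 1 + y := by linarith [Set.mem_Ioi.mp hy]
        field_simp
        ring
  have hderiv : ∀ x ∈ Set.Ioo (0:ℝ) 1,
      HasDerivWithinAt (fun x : ℝ => x / (1 - x)) (((1 - x) ^ 2)⁻¹) (Set.Ioo 0 1) x := by
    intro x hx
    have hne : (1:ℝ) - x ≠ 0 := by have := hx.2; intro h; linarith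
    have := (hasDerivAt_id x).div ((hasDerivAt_id x).const_sub 1) hne
    have h2 : ((1 - x) ^ 2)⁻¹ = (1 * (1 - x) - x * -1) / (1 - x) ^ 2 := by ring
    rw [h2]
    exact this.hasDerivWithinAt
  have hinj : Set.InjOn (fun x : ℝ => x / (1 - x)) (Set.Ioo 0 1) := by
    intro a ha b hb h
    have h1 : (1:ℝ) - a ≠ 0 := by have := ha.2; intro hh; linarith
    have h2 : (1:ℝ) - b ≠ 0 := by have := hb.2; intro hh; linarith
    field_simp at h
    linarith
  have := integral_image_eq_integral_abs_deriv_smul measurableSet_Ioo hderiv hinj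
    (fun u => u ^ (s - 1) / (1 + u))
  rw [himg] at this
  rw [this, ← beta01 s h0 h1]
  refine setIntegral_congr_fun measurableSet_Ioo (fun x hx => ?_)
  obtain ⟨hx0, hx1⟩ := hx
  have ht : (0:ℝ) < 1 - x := by linarith
  have hplus : 1 + x / (1 - x) = 1 / (1 - x) := by field_simp; ring
  rw [smul_eq_mul, hplus, Real.div_rpow hx0.le ht.le]
  rw [abs_of_pos (by positivity)]
  have e1 : (1 - x) ^ (s - 1) = (1 - x) ^ s * ((1 - x))⁻¹ := by
    rw [Real.rpow_sub ht, Real.rpow_one]; ring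
  have e2 : (1 - x) ^ (-s) = ((1 - x) ^ s)⁻¹ := Real.rpow_neg ht.le s
  have hs0 : (1 - x) ^ s ≠ 0 := by positivity
  rw [e1, e2]
  field_simp

lemma Freal (m : ℝ) (hm : 1 < m) (l : ℕ) (hl : (l:ℝ) < m - 1) (t : ℝ) (ht : 0 < t) :
    ∫ x in Set.Ioi (0:ℝ), x ^ l / (x ^ m + t)
      = Real.pi / (m * Real.sin (Real.pi * (((l:ℝ) + 1) / m))) * t ^ (((l:ℝ) + 1) / m - 1) := by
  have hm0 : (0:ℝ) < m := by linarith
  set s : ℝ := ((l:ℝ) + 1) / m with hs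
  have hs0 : 0 < s := by positivity
  have hs1 : s < 1 := by rw [hs, div_lt_one hm0]; linarith
  set c : ℝ := t ^ (1 / m) with hc
  have hc0 : 0 < c := Real.rpow_pos_of_pos ht _
  have hcm : c ^ m = t := by
    rw [hc, ← Real.rpow_mul ht.le, one_div, inv_mul_cancel₀ (ne_of_gt hm0), Real.rpow_one]
  have himg : (fun u : ℝ => c * u ^ (1 / m)) '' Set.Ioi 0 = Set.Ioi 0 := by
    ext y
    constructor
    · rintro ⟨u, hu, rfl⟩
      exact mul_pos hc0 (Real.rpow_pos_of_pos hu _)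
    · intro hy
      have hy0 : (0:ℝ) < y := hy
      refine ⟨(y / c) ^ m, Real.rpow_pos_of_pos (div_pos hy0 hc0) _, ?_⟩
      show c * ((y / c) ^ m) ^ (1 / m) = y
      rw [← Real.rpow_mul (le_of_lt (div_pos hy0 hc0)), mul_one_div, div_self (ne_of_gt hm0),
        Real.rpow_one]
      field_simp
  have hderiv : ∀ u ∈ Set.Ioi (0:ℝ),
      HasDerivWithinAt (fun u : ℝ => c * u ^ (1 / m)) (c * (1 / m * u ^ (1 / m - 1)))
        (Set.Ioi 0) u := by
    intro u hu
    exact ((Real.hasDerivAt_rpow_const (Or.inl (ne_of_gt hu))).const_mul c).hasDerivWithinAt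
  have hinj : Set.InjOn (fun u : ℝ => c * u ^ (1 / m)) (Set.Ioi 0) := by
    intro a ha b hb h
    have h' : (a:ℝ) ^ (1 / m) = b ^ (1 / m) := by
      exact mul_left_cancel₀ (ne_of_gt hc0) h
    have : ((a:ℝ) ^ (1 / m)) ^ m = (b ^ (1 / m)) ^ m := by rw [h']
    rwa [← Real.rpow_mul (le_of_lt ha), ← Real.rpow_mul (le_of_lt hb),
      one_div, inv_mul_cancel₀ (ne_of_gt hm0), Real.rpow_one, Real.rpow_one] at this
  have key := integral_image_eq_integral_abs_deriv_smul measurableSet_Ioi hderiv hinj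
    (fun x => x ^ l / (x ^ m + t))
  rw [himg] at key
  rw [key]
  have congr1 : ∀ u ∈ Set.Ioi (0:ℝ),
      |c * (1 / m * u ^ (1 / m - 1))| • ((c * u ^ (1 / m)) ^ l / ((c * u ^ (1 / m)) ^ m + t))
        = (t ^ (s - 1) / m) * (u ^ (s - 1) / (1 + u)) := by
    intro u hu
    have hu0 : (0:ℝ) < u := hu
    have hx0 : (0:ℝ) < c * u ^ (1 / m) := mul_pos hc0 (Real.rpow_pos_of_pos hu0 _)
    have hxm : (c * u ^ (1 / m)) ^ m = t * u := by
      rw [Real.mul_rpow hc0.le (Real.rpow_pos_of_pos hu0 _).le, hcm,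
        ← Real.rpow_mul hu0.le, one_div, inv_mul_cancel₀ (ne_of_gt hm0), Real.rpow_one]
    have hxl : (c * u ^ (1 / m)) ^ l = c ^ l * u ^ ((l:ℝ) / m) := by
      rw [mul_pow, ← Real.rpow_natCast (u ^ (1/m)) l, ← Real.rpow_mul hu0.le]
      ring_nf
    rw [smul_eq_mul, abs_of_pos (by positivity), hxm, hxl]
    have hob : c ^ l = t ^ ((l:ℝ) / m) := by
      rw [hc, ← Real.rpow_natCast (t ^ (1/m)) l, ← Real.rpow_mul ht.le]
      ring_nf
    have hts : t ^ (s - 1) = t ^ ((l:ℝ) / m) * t ^ (1 / m - 1) := by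
      rw [← Real.rpow_add ht]
      congr 1
      rw [hs]
      field_simp
      ring
    have hus : u ^ (1 / m - 1) * u ^ ((l:ℝ) / m) = u ^ (s - 1) := by
      rw [← Real.rpow_add hu0]
      congr 1
      rw [hs]; field_simp; ring
    have htm : t ^ (1/m - 1 : ℝ) = c / t := by
      have h3 := Real.rpow_sub ht (1/m) 1
      rw [Real.rpow_one] at h3
      rw [hc]; exact h3
    have hden : t * u + t = t * (1 + u) := by ring
    rw [hob, hts, htm, hden, ← hus]
    have h1u : (1:ℝ) + u ≠ 0 := by positivity
    field_simp
  rw [setIntegral_congr_fun measurableSet_Ioi congr1, integral_const_mul,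
    mellin_one_add s hs0 hs1]
  ring

lemma denom_ne {a : ℂ} (ha : a ∈ Complex.slitPlane) {r : ℝ} (hr : 0 ≤ r) :
    ((r:ℂ)) + a ≠ 0 := by
  intro h
  have hre : r + a.re = 0 := by
    have := congrArg Complex.re h; simpa using this
  have him : a.im = 0 := by
    have := congrArg Complex.im h; simpa using this
  rcases ha with h1 | h1
  · linarith
  · exact h1 him

lemma Fcont (m : ℝ) (hm : 1 < m) (l : ℕ) (a : ℂ) (ha : a ∈ Complex.slitPlane) :
    ContinuousOn (fun x : ℝ => (x:ℂ) ^ l / (((x ^ m : ℝ) : ℂ) + a)) (Set.Ici 0) := by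
  have hm0 : (0:ℝ) < m := by linarith
  apply ContinuousOn.div
  · exact (continuous_ofReal.continuousOn).pow l
  · apply ContinuousOn.add _ continuousOn_const
    apply continuous_ofReal.comp_continuousOn
    intro x hx
    exact (Real.continuousAt_rpow_const x m (Or.inr hm0.le)).continuousWithinAt
  · intro x hx
    exact denom_ne ha (Real.rpow_nonneg hx m)

lemma Fint (m : ℝ) (hm : 1 < m) (l : ℕ) (hl : (l:ℝ) < m - 1) (a : ℂ)
    (ha : a ∈ Complex.slitPlane) :
    IntegrableOn (fun x : ℝ => (x:ℂ) ^ l / (((x ^ m : ℝ) : ℂ) + a)) (Set.Ioi 0) := by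
  have hm0 : (0:ℝ) < m := by linarith
  set R : ℝ := max 1 ((2 * ‖a‖ + 1) ^ (1/m)) with hR
  have hR1 : (1:ℝ) ≤ R := le_max_left _ _
  have hR0 : (0:ℝ) < R := by linarith
  have hsub : Set.Ioi (0:ℝ) ⊆ Set.Ioc 0 R ∪ Set.Ioi R := by
    intro x hx
    by_cases h : x ≤ R
    · exact Or.inl ⟨hx, h⟩
    · exact Or.inr (by simpa using lt_of_not_ge h)
  refine IntegrableOn.mono_set ?_ hsub
  apply IntegrableOn.union
  · have hcont : ContinuousOn (fun x : ℝ => (x:ℂ) ^ l / (((x ^ m : ℝ) : ℂ) + a))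
        (Set.Icc 0 R) := (Fcont m hm l a ha).mono (Set.Icc_subset_Ici_self)
    exact (hcont.integrableOn_compact isCompact_Icc).mono_set Set.Ioc_subset_Icc_self
  · -- tail
    have hmeas : AEStronglyMeasurable (fun x : ℝ => (x:ℂ) ^ l / (((x ^ m : ℝ) : ℂ) + a))
        (volume.restrict (Set.Ioi R)) := by
      apply ContinuousOn.aestronglyMeasurable _ measurableSet_Ioi
      exact (Fcont m hm l a ha).mono (fun x hx => le_of_lt (lt_of_lt_of_le hR0 (le_of_lt hx)))
    have hbnd : Integrable (fun x : ℝ => 2 * x ^ ((l:ℝ) - m)) (volume.restrict (Set.Ioi R)) := by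
      exact (integrableOn_Ioi_rpow_of_lt (by linarith) hR0).const_mul 2
    apply Integrable.mono' hbnd hmeas
    filter_upwards [ae_restrict_mem measurableSet_Ioi] with x hx
    have hx1 : (1:ℝ) ≤ x := le_trans hR1 (le_of_lt hx)
    have hx0 : (0:ℝ) < x := by linarith
    have hxma : 2 * ‖a‖ + 1 ≤ x ^ m := by
      have h1 : ((2 * ‖a‖ + 1) ^ (1/m)) ≤ x := le_trans (le_max_right _ _) (le_of_lt hx)
      have h2 : (((2 * ‖a‖ + 1) ^ (1/m)) : ℝ) ^ m ≤ x ^ m :=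
        Real.rpow_le_rpow (Real.rpow_nonneg (by positivity) _) h1 (le_of_lt hm0)
      rwa [← Real.rpow_mul (by positivity), one_div, inv_mul_cancel₀ (ne_of_gt hm0),
        Real.rpow_one] at h2
    have hlow : x ^ m / 2 ≤ ‖((x ^ m : ℝ) : ℂ) + a‖ := by
      have h3 : ‖((x ^ m : ℝ) : ℂ)‖ - ‖-a‖ ≤
          ‖((x ^ m : ℝ) : ℂ) + a‖ := by
        have := norm_sub_norm_le ((x ^ m : ℝ) : ℂ) (-a)
        simpa [sub_neg_eq_add] using this
      have h4 : ‖((x ^ m : ℝ) : ℂ)‖ = x ^ m := by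
        rw [Complex.norm_real, Real.norm_eq_abs, _root_.abs_of_nonneg (Real.rpow_nonneg hx0.le m)]
      rw [h4, norm_neg] at h3
      have : ‖a‖ ≤ x ^ m / 2 := by linarith
      linarith
    have hnorm : ‖(x:ℂ) ^ l / (((x ^ m : ℝ) : ℂ) + a)‖
        = x ^ (l:ℕ) / ‖((x ^ m : ℝ) : ℂ) + a‖ := by
      rw [norm_div, norm_pow, Complex.norm_real]
      simp [_root_.abs_of_nonneg hx0.le]
    rw [hnorm]
    have hpos : 0 < ‖((x ^ m : ℝ) : ℂ) + a‖ := lt_of_lt_of_le (by positivity) hlow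
    calc x ^ (l:ℕ) / ‖((x ^ m : ℝ) : ℂ) + a‖
        ≤ x ^ (l:ℕ) / (x ^ m / 2) := by
          apply div_le_div_of_nonneg_left (by positivity) (by positivity) hlow
      _ = 2 * x ^ ((l:ℝ) - m) := by
          rw [← Real.rpow_natCast x l, Real.rpow_sub hx0]
          field_simp

lemma Fdiff (m : ℝ) (hm : 1 < m) (l : ℕ) (hl : (l:ℝ) < m - 1) (a₀ : ℂ)
    (ha₀ : a₀ ∈ Complex.slitPlane) :
    DifferentiableAt ℂ
      (fun a : ℂ => ∫ x in Set.Ioi (0:ℝ), (x:ℂ) ^ l / (((x ^ m : ℝ) : ℂ) + a)) a₀ := by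
  have hm0 : (0:ℝ) < m := by linarith
  obtain ⟨ε, hε, hball⟩ : ∃ ε > 0, Metric.closedBall a₀ ε ⊆ Complex.slitPlane := by
    obtain ⟨ε, hε, h⟩ := Metric.isOpen_iff.mp Complex.isOpen_slitPlane a₀ ha₀
    exact ⟨ε/2, by linarith, (Metric.closedBall_subset_ball (by linarith)).trans h⟩
  set A : ℝ := ‖a₀‖ + ε with hA
  set X : ℝ := max 1 ((2 * A + 1) ^ (1/m)) with hX
  have hX1 : (1:ℝ) ≤ X := le_max_left _ _
  have hX0 : (0:ℝ) < X := by linarith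
  -- uniform lower bound on compact part
  obtain ⟨δ, hδ0, hδ⟩ : ∃ δ > 0, ∀ x ∈ Set.Icc (0:ℝ) X, ∀ a ∈ Metric.closedBall a₀ ε,
      δ ≤ ‖((x ^ m : ℝ) : ℂ) + a‖ := by
    have hKc : IsCompact ((Set.Icc (0:ℝ) X) ×ˢ Metric.closedBall a₀ ε) :=
      isCompact_Icc.prod (isCompact_closedBall _ _)
    have hne : ((Set.Icc (0:ℝ) X) ×ˢ Metric.closedBall a₀ ε).Nonempty :=
      ⟨(0, a₀), ⟨⟨le_refl _, hX0.le⟩, Metric.mem_closedBall_self hε.le⟩⟩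
    have hcont : ContinuousOn (fun p : ℝ × ℂ => ‖((p.1 ^ m : ℝ) : ℂ) + p.2‖)
        ((Set.Icc (0:ℝ) X) ×ˢ Metric.closedBall a₀ ε) := by
      apply continuous_norm.comp_continuousOn
      apply ContinuousOn.add
      · apply continuous_ofReal.comp_continuousOn
        intro p hp
        exact ((Real.continuousAt_rpow_const p.1 m (Or.inr hm0.le)).comp
          continuousAt_fst).continuousWithinAt
      · exact continuous_snd.continuousOn
    obtain ⟨p, hpK, hpmin⟩ := hKc.exists_isMinOn hne hcont
    rw [isMinOn_iff] at hpmin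
    refine ⟨‖((p.1 ^ m : ℝ) : ℂ) + p.2‖, ?_, fun x hx a ha => hpmin (x, a) ⟨hx, ha⟩⟩
    have := denom_ne (hball hpK.2) (Real.rpow_nonneg hpK.1.1 m)
    exact norm_pos_iff.mpr this
  -- the bound function
  set bound : ℝ → ℝ := fun x => if x ≤ X then x ^ l / δ ^ 2 else 4 * x ^ ((l:ℝ) - 2*m)
    with hbound_def
  have key := hasDerivAt_integral_of_dominated_loc_of_deriv_le (𝕜 := ℂ)
    (μ := volume.restrict (Set.Ioi (0:ℝ)))
    (F := fun a (x : ℝ) => (x:ℂ) ^ l / (((x ^ m : ℝ) : ℂ) + a))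
    (F' := fun a (x : ℝ) => -((x:ℂ) ^ l / ((((x ^ m : ℝ) : ℂ) + a) ^ 2)))
    (x₀ := a₀) (bound := bound) (s := Metric.ball a₀ ε) (Metric.ball_mem_nhds a₀ hε) ?_ ?_ ?_ ?_ ?_ ?_
  · exact key.2.differentiableAt
  · -- measurability, eventually in 𝓝 a₀
    filter_upwards [Complex.isOpen_slitPlane.mem_nhds ha₀] with a ha
    exact ((Fcont m hm l a ha).mono (fun x hx => le_of_lt hx)).aestronglyMeasurable
      measurableSet_Ioi
  · exact Fint m hm l hl a₀ ha₀
  · -- measurability of F' a₀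
    apply ContinuousOn.aestronglyMeasurable _ measurableSet_Ioi
    apply ContinuousOn.neg
    apply ContinuousOn.div
    · exact (continuous_ofReal.continuousOn).pow l
    · apply ContinuousOn.pow
      apply ContinuousOn.add _ continuousOn_const
      apply continuous_ofReal.comp_continuousOn
      intro x hx
      exact (Real.continuousAt_rpow_const x m (Or.inr hm0.le)).continuousWithinAt
    · intro x hx
      exact pow_ne_zero 2 (denom_ne ha₀ (Real.rpow_nonneg (le_of_lt hx) m))
  · -- the bound
    filter_upwards [ae_restrict_mem measurableSet_Ioi] with x hx a ha
    have hx0 : (0:ℝ) < x := hx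
    have ha' : a ∈ Metric.closedBall a₀ ε := Metric.ball_subset_closedBall ha
    have hnorm : ‖-((x:ℂ) ^ l / ((((x ^ m : ℝ) : ℂ) + a) ^ 2))‖
        = x ^ l / ‖((x ^ m : ℝ) : ℂ) + a‖ ^ 2 := by
      rw [norm_neg, norm_div, norm_pow, norm_pow, Complex.norm_real,
        Real.norm_eq_abs, _root_.abs_of_nonneg hx0.le]
    rw [hnorm, hbound_def]
    by_cases hxX : x ≤ X
    · simp only [if_pos hxX]
      apply div_le_div_of_nonneg_left (by positivity) (by positivity)
      have := hδ x ⟨hx0.le, hxX⟩ a ha'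
      exact pow_le_pow_left₀ hδ0.le this 2
    · simp only [if_neg hxX]
      push_neg at hxX
      have hx1 : (1:ℝ) ≤ x := le_trans hX1 hxX.le
      have hxma : 2 * A + 1 ≤ x ^ m := by
        have h1 : ((2 * A + 1) ^ (1/m)) ≤ x := le_trans (le_max_right _ _) hxX.le
        have h2 : (((2 * A + 1) ^ (1/m)) : ℝ) ^ m ≤ x ^ m :=
          Real.rpow_le_rpow (Real.rpow_nonneg (by positivity) _) h1 hm0.le
        rwa [← Real.rpow_mul (by positivity), one_div, inv_mul_cancel₀ (ne_of_gt hm0),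
          Real.rpow_one] at h2
      have haA : ‖a‖ ≤ A := by
        have := Metric.mem_closedBall.mp ha'
        calc ‖a‖ = ‖a - a₀ + a₀‖ := by rw [sub_add_cancel]
          _ ≤ ‖a - a₀‖ + ‖a₀‖ := norm_add_le _ _
          _ ≤ ε + ‖a₀‖ := by
              gcongr
              rwa [← dist_eq_norm]
          _ = A := by rw [hA]; ring
      have hlow : x ^ m / 2 ≤ ‖((x ^ m : ℝ) : ℂ) + a‖ := by
        have h3 := norm_sub_norm_le ((x ^ m : ℝ) : ℂ) (-a)
        rw [sub_neg_eq_add, norm_neg] at h3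
        have h4 : ‖((x ^ m : ℝ) : ℂ)‖ = x ^ m := by
          rw [Complex.norm_real, Real.norm_eq_abs, _root_.abs_of_nonneg (Real.rpow_nonneg hx0.le m)]
        rw [h4] at h3
        have : ‖a‖ ≤ x ^ m / 2 := by linarith
        linarith
      calc x ^ l / ‖((x ^ m : ℝ) : ℂ) + a‖ ^ 2
          ≤ x ^ l / (x ^ m / 2) ^ 2 := by
            apply div_le_div_of_nonneg_left (by positivity) (by positivity)
            exact pow_le_pow_left₀ (by positivity) hlow 2
        _ = 4 * x ^ ((l:ℝ) - 2*m) := by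
            have hxm2 : (x ^ m) ^ 2 = x ^ (2*m) := by
              rw [← Real.rpow_natCast (x ^ m) 2, ← Real.rpow_mul hx0.le]
              ring_nf
            have hx2m : x ^ (2*m) ≠ 0 := by positivity
            rw [← Real.rpow_natCast x l, Real.rpow_sub hx0, div_pow, hxm2]
            field_simp
            ring
  · -- integrability of bound
    have h1 : IntegrableOn bound (Set.Ioc 0 X) := by
      apply (ContinuousOn.integrableOn_compact isCompact_Icc
        (f := fun x : ℝ => x ^ l / δ ^ 2) ?_).mono_set Set.Ioc_subset_Icc_self |>.congr_fun ?_
        measurableSet_Ioc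
      · exact (continuous_pow l).continuousOn.div continuousOn_const
          (fun x _ => by positivity)
      · intro x hx
        rw [hbound_def]
        simp only [if_pos hx.2]
    have h2 : IntegrableOn bound (Set.Ioi X) := by
      have hbase : IntegrableOn (fun x : ℝ => 4 * x ^ ((l:ℝ) - 2*m)) (Set.Ioi X) :=
        (integrableOn_Ioi_rpow_of_lt (show (l:ℝ) - 2*m < -1 by linarith) hX0).const_mul 4
      apply hbase.congr_fun ?_ measurableSet_Ioi
      intro x hx
      rw [hbound_def]
      simp only [if_neg (not_le.mpr (show X < x from hx))]
    apply (h1.union h2).mono_set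
    intro x hx
    by_cases h : x ≤ X
    · exact Or.inl ⟨hx, h⟩
    · exact Or.inr (by simpa using lt_of_not_ge h)
  · -- differentiability in a
    filter_upwards [ae_restrict_mem measurableSet_Ioi] with x hx a ha
    have hx0 : (0:ℝ) < x := hx
    have hne : (((x ^ m : ℝ) : ℂ) + a) ≠ 0 :=
      denom_ne (hball (Metric.ball_subset_closedBall ha)) (Real.rpow_nonneg hx0.le m)
    have h1 : HasDerivAt (fun a : ℂ => ((x ^ m : ℝ) : ℂ) + a) 1 a :=
      (hasDerivAt_id a).const_add _
    have h2 := h1.inv hne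
    have h3 := h2.const_mul ((x:ℂ) ^ l)
    have heq : (fun b : ℂ => (x:ℂ) ^ l / (((x ^ m : ℝ) : ℂ) + b))
        = fun b : ℂ => (x:ℂ) ^ l * ((((x ^ m : ℝ) : ℂ) + b))⁻¹ := by
      funext b; rw [div_eq_mul_inv]
    show HasDerivAt (fun b : ℂ => (x:ℂ) ^ l / (((x ^ m : ℝ) : ℂ) + b)) _ a
    rw [heq]
    exact h3.congr_deriv (by ring)

lemma slitPreconn : IsPreconnected Complex.slitPlane := by
  have hpc : IsPathConnected Complex.slitPlane := by
    refine isPathConnected_iff.mpr ⟨⟨1, Complex.one_mem_slitPlane⟩, fun x hx y hy => ?_⟩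
    have h1 : JoinedIn Complex.slitPlane 1 x :=
      JoinedIn.of_segment_subset (Complex.starConvex_one_slitPlane.segment_subset hx)
    have h2 : JoinedIn Complex.slitPlane 1 y :=
      JoinedIn.of_segment_subset (Complex.starConvex_one_slitPlane.segment_subset hy)
    exact h1.symm.trans h2
  exact hpc.isConnected.isPreconnected

lemma Fval (m : ℝ) (hm : 1 < m) (l : ℕ) (hl : (l:ℝ) < m - 1) (a : ℂ)
    (ha : a ∈ Complex.slitPlane) :
    ∫ x in Set.Ioi (0:ℝ), (x:ℂ) ^ l / (((x ^ m : ℝ) : ℂ) + a)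
      = ((Real.pi / (m * Real.sin (Real.pi * (((l:ℝ) + 1) / m))) : ℝ) : ℂ)
          * a ^ (((((l:ℝ) + 1) / m - 1 : ℝ)) : ℂ) := by
  set F : ℂ → ℂ := fun a => ∫ x in Set.Ioi (0:ℝ), (x:ℂ) ^ l / (((x ^ m : ℝ) : ℂ) + a) with hF
  set G : ℂ → ℂ := fun a => ((Real.pi / (m * Real.sin (Real.pi * (((l:ℝ) + 1) / m))) : ℝ) : ℂ)
      * a ^ (((((l:ℝ) + 1) / m - 1 : ℝ)) : ℂ) with hG
  have hFa : AnalyticOnNhd ℂ F Complex.slitPlane := by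
    apply DifferentiableOn.analyticOnNhd _ Complex.isOpen_slitPlane
    exact fun a ha => (Fdiff m hm l hl a ha).differentiableWithinAt
  have hGa : AnalyticOnNhd ℂ G Complex.slitPlane := by
    apply DifferentiableOn.analyticOnNhd _ Complex.isOpen_slitPlane
    intro a ha
    apply DifferentiableWithinAt.const_mul
    exact (DifferentiableAt.cpow differentiableAt_id (differentiableAt_const _)
      ha).differentiableWithinAt
  -- equality on reals > 1
  have hFG : ∀ t : ℝ, 0 < t → F (t:ℂ) = G (t:ℂ) := by
    intro t ht
    have h1 : F (t:ℂ) = ((∫ x in Set.Ioi (0:ℝ), x ^ l / (x ^ m + t) : ℝ) : ℂ) := by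
      have e1 : F (t:ℂ) = ∫ x in Set.Ioi (0:ℝ), ((x ^ l / (x ^ m + t) : ℝ) : ℂ) := by
        rw [hF]
        refine setIntegral_congr_fun measurableSet_Ioi (fun x hx => ?_)
        push_cast
        rfl
      rw [e1]
      exact integral_ofReal
    rw [h1, Freal m hm l hl t ht, hG]
    push_cast
    rw [Complex.ofReal_cpow ht.le]
    push_cast
    ring
  -- frequently equal near 1
  have hfreq : ∃ᶠ z in 𝓝[≠] (1:ℂ), F z = G z := by
    have htend : Tendsto (fun n : ℕ => ((1 + ((n:ℝ)+1)⁻¹ : ℝ) : ℂ)) atTop (𝓝[≠] (1:ℂ)) := by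
      apply tendsto_nhdsWithin_of_tendsto_nhds_of_eventually_within
      · have : Tendsto (fun n : ℕ => (1 + ((n:ℝ)+1)⁻¹ : ℝ)) atTop (𝓝 1) := by
          have h0 : Tendsto (fun n : ℕ => (((n:ℝ)+1)⁻¹ : ℝ)) atTop (𝓝 0) :=
            tendsto_one_div_add_atTop_nhds_zero_nat.congr (fun n => by rw [one_div])
          have := h0.const_add (1:ℝ)
          simpa using this
        have h2 := (Complex.continuous_ofReal.tendsto (1:ℝ)).comp this
        simpa [Function.comp_def] using h2
      · apply Eventually.of_forall
        intro n
        simp only [Set.mem_compl_iff, Set.mem_singleton_iff]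
        intro h
        rw [Complex.ofReal_eq_one] at h
        have hpos : (0:ℝ) < ((n:ℝ)+1)⁻¹ := by positivity
        linarith
    exact htend.frequently (Frequently.of_forall (fun n => hFG _ (by positivity)))
  exact hFa.eqOn_of_preconnected_of_frequently_eq hGa slitPreconn
    Complex.one_mem_slitPlane hfreq ha

lemma cpow_polar (z : ℂ) (hz : z ≠ 0) (α : ℝ) :
    z ^ ((α : ℝ) : ℂ) = ((‖z‖ ^ α : ℝ) : ℂ)
      * Complex.exp (((α * z.arg : ℝ) : ℂ) * Complex.I) := by
  rw [Complex.cpow_def_of_ne_zero hz]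
  have hlog : Complex.log z = ((Real.log (‖z‖) : ℝ) : ℂ) + z.arg * Complex.I := rfl
  rw [hlog, add_mul, Complex.exp_add]
  have hr0 : 0 < ‖z‖ := norm_pos_iff.mpr hz
  congr 1
  · rw [Real.rpow_def_of_pos hr0, Complex.ofReal_exp, Complex.ofReal_mul]
  · congr 1
    push_cast
    ring



/-- For `m > 1`, `l < m − 1`, and `ω` in the upper half-plane with polar form
`ω = |ω| e^{iθ}`, `θ ∈ (0, π)`, the integral `L_{m,l}(ω)` converges absolutely and
equals `(2πi/m) · q_ω^{l+1−m} / ((−1)^l μ^{l+1} − 1)` where `q_ω = |ω|^{1/m} e^{iθ/m}`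
and `μ = e^{iπ/m}` (so `q_ω^{l+1−m} = |ω|^{(l+1−m)/m} e^{iθ(l+1−m)/m}`). -/
theorem stmt0 (m : ℝ) (hm : 1 < m) (l : ℕ) (hl : (l : ℝ) < m - 1)
    (ω : ℂ) (him : 0 < ω.im) (θ : ℝ) (hθ : θ ∈ Set.Ioo 0 Real.pi)
    (hpolar : ω = (‖ω‖ : ℂ) * Complex.exp ((θ : ℂ) * Complex.I)) :
    Integrable (fun k : ℝ => (k : ℂ) ^ l / (ω - ((Real.sign k * |k| ^ m : ℝ) : ℂ))) ∧
      Lint m l ω =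
        (2 * (Real.pi : ℂ) * Complex.I / (m : ℂ)) *
            (((‖ω‖ ^ (((l : ℝ) + 1 - m) / m) : ℝ) : ℂ) *
              Complex.exp (((((l : ℝ) + 1 - m) / m * θ : ℝ) : ℂ) * Complex.I)) /
          ((-1 : ℂ) ^ l * Complex.exp (((Real.pi / m : ℝ) : ℂ) * Complex.I) ^ (l + 1) - 1) := by
  have hm0 : (0:ℝ) < m := by linarith
  set f : ℝ → ℂ := fun k : ℝ => (k : ℂ) ^ l / (ω - ((Real.sign k * |k| ^ m : ℝ) : ℂ)) with hf
  set s : ℝ := ((l:ℝ) + 1) / m with hs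
  have hs0 : 0 < s := by positivity
  have hs1 : s < 1 := by rw [hs, div_lt_one hm0]; linarith
  have hωne : ω ≠ 0 := by intro h; rw [h] at him; simp at him
  have hωslit : ω ∈ Complex.slitPlane := Or.inr (ne_of_gt him)
  have hnegslit : -ω ∈ Complex.slitPlane := by
    right; simp only [Complex.neg_im]; intro h; rw [neg_eq_zero] at h; exact (ne_of_gt him) h
  set C : ℝ := Real.pi / (m * Real.sin (Real.pi * s)) with hC
  -- equality of integrands on positive axis
  have hpos_eq : ∀ k ∈ Set.Ioi (0:ℝ),
      f k = -((k:ℂ) ^ l / (((k ^ m : ℝ) : ℂ) + (-ω))) := by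
    intro k hk
    have hk0 : (0:ℝ) < k := hk
    rw [hf]
    simp only
    rw [Real.sign_of_pos hk0, abs_of_pos hk0, one_mul]
    rw [show ω - ((k ^ m : ℝ) : ℂ) = -(((k ^ m : ℝ) : ℂ) + -ω) by ring, div_neg]
  have hneg_eq : ∀ k ∈ Set.Ioi (0:ℝ),
      f (-k) = ((-1:ℂ) ^ l) * ((k:ℂ) ^ l / (((k ^ m : ℝ) : ℂ) + ω)) := by
    intro k hk
    have hk0 : (0:ℝ) < k := hk
    rw [hf]
    simp only
    rw [Real.sign_of_neg (by linarith : -k < 0), abs_neg, abs_of_pos hk0]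
    push_cast
    rw [neg_pow]
    rw [show ω - (-1) * ((k ^ m : ℝ) : ℂ) = ((k ^ m : ℝ) : ℂ) + ω from by ring]
    rw [mul_div_assoc]
  -- integrability
  have hIntPos : IntegrableOn f (Set.Ioi 0) := by
    apply IntegrableOn.congr_fun ((Fint m hm l hl (-ω) hnegslit).neg) _ measurableSet_Ioi
    intro k hk
    exact (hpos_eq k hk).symm
  have hIntIci : IntegrableOn (fun x => f (-x)) (Set.Ici 0) := by
    rw [integrableOn_Ici_iff_integrableOn_Ioi]
    apply IntegrableOn.congr_fun ((Fint m hm l hl ω hωslit).const_mul ((-1:ℂ)^l)) _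
      measurableSet_Ioi
    intro k hk
    exact (hneg_eq k hk).symm
  have hIntIic : IntegrableOn f (Set.Iic 0) := by
    have A : MeasurableEmbedding (fun x : ℝ => -x) :=
      (Homeomorph.neg ℝ).isClosedEmbedding.measurableEmbedding
    rw [IntegrableOn, ← Measure.map_neg_eq_self (volume : Measure ℝ),
      MeasurableEmbedding.restrict_map A, A.integrable_map_iff]
    simp only [Function.comp_def, Set.neg_preimage, Set.neg_Iic, neg_zero]
    exact hIntIci
  have hInt : Integrable f := by
    rw [← integrableOn_univ, ← Set.Iic_union_Ioi (a := (0:ℝ))]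
    exact hIntIic.union hIntPos
  refine ⟨hInt, ?_⟩
  -- values of the two half-line integrals
  have hIoi : ∫ k in Set.Ioi (0:ℝ), f k
      = -((C:ℂ) * (-ω) ^ (((s - 1 : ℝ)) : ℂ)) := by
    rw [setIntegral_congr_fun measurableSet_Ioi hpos_eq, integral_neg,
      Fval m hm l hl (-ω) hnegslit]
  have hIic : ∫ k in Set.Iic (0:ℝ), f k
      = ((-1:ℂ) ^ l) * ((C:ℂ) * ω ^ (((s - 1 : ℝ)) : ℂ)) := by
    have h1 := integral_comp_neg_Ioi (0:ℝ) f
    rw [neg_zero] at h1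
    rw [← h1, setIntegral_congr_fun measurableSet_Ioi hneg_eq, integral_const_mul,
      Fval m hm l hl ω hωslit]
  have hsplit : Lint m l ω = (∫ k in Set.Iic (0:ℝ), f k) + ∫ k in Set.Ioi (0:ℝ), f k :=
    (intervalIntegral.integral_Iic_add_Ioi hIntIic hIntPos).symm
  -- polar data
  set r : ℝ := ‖ω‖ with hr
  have hr0 : 0 < r := norm_pos_iff.mpr hωne
  have harg : ω.arg = θ := by
    conv_lhs => rw [hpolar]
    rw [Complex.exp_mul_I, Complex.arg_real_mul _ hr0,
      Complex.arg_cos_add_sin_mul_I ⟨by linarith [Real.pi_pos, hθ.1], hθ.2.le⟩]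
  have hexp_shift : Complex.exp (((θ - Real.pi : ℝ) : ℂ) * Complex.I)
      = -Complex.exp ((θ : ℝ) * Complex.I) := by
    push_cast
    rw [sub_mul, Complex.exp_sub, Complex.exp_pi_mul_I, div_neg, div_one]
  have hargneg : (-ω).arg = θ - Real.pi := by
    have hneg : -ω = (r:ℂ) * Complex.exp (((θ - Real.pi : ℝ) : ℂ) * Complex.I) := by
      rw [hexp_shift, hpolar]; push_cast; ring
    rw [hneg, Complex.exp_mul_I, Complex.arg_real_mul _ hr0,
      Complex.arg_cos_add_sin_mul_I]
    constructor
    · push_cast; linarith [hθ.1]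
    · push_cast; linarith [hθ.2, Real.pi_pos]
  -- cpow evaluations
  set α : ℝ := s - 1 with hα
  have hωpow : ω ^ ((α : ℝ) : ℂ)
      = ((r ^ α : ℝ) : ℂ) * Complex.exp (((α * θ : ℝ) : ℂ) * Complex.I) := by
    rw [cpow_polar ω hωne α, harg, hr]
  have hmωpow : (-ω) ^ ((α : ℝ) : ℂ)
      = ((r ^ α : ℝ) : ℂ) * Complex.exp (((α * (θ - Real.pi) : ℝ) : ℂ) * Complex.I) := by
    rw [cpow_polar (-ω) (neg_ne_zero.mpr hωne) α, hargneg, hr, norm_neg]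
  -- the unit-circle quantity E
  set E : ℂ := Complex.exp (((Real.pi * s : ℝ) : ℂ) * Complex.I) with hE
  have hE0 : E ≠ 0 := Complex.exp_ne_zero _
  have hwE : Complex.exp (((Real.pi / m : ℝ) : ℂ) * Complex.I) ^ (l + 1) = E := by
    rw [← Complex.exp_nat_mul, hE]
    congr 1
    push_cast
    rw [hs]
    field_simp
    push_cast
    ring
  have hsinpos : 0 < Real.sin (Real.pi * s) :=
    Real.sin_pos_of_pos_of_lt_pi (by positivity)
      (by nlinarith [Real.pi_pos])
  have hsinC : Complex.sin ((Real.pi * s : ℝ) : ℂ) = (E⁻¹ - E) * Complex.I / 2 := by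
    rw [Complex.sin, hE, neg_mul, Complex.exp_neg]
  have hsinC_ne : Complex.sin ((Real.pi * s : ℝ) : ℂ) ≠ 0 := by
    rw [← Complex.ofReal_sin]
    exact_mod_cast (ne_of_gt hsinpos)
  set ε : ℂ := (-1:ℂ) ^ l with hε
  have hεε : ε * ε = 1 := by
    rw [hε, ← pow_add]
    exact Even.neg_one_pow ⟨l, rfl⟩
  have hεE : ε * E - 1 ≠ 0 := by
    intro h
    have h2 : E = ε := by
      have h4 : ε * (ε * E) = ε * 1 := by rw [sub_eq_zero.mp h]
      rwa [← mul_assoc, hεε, one_mul, mul_one] at h4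
    have h3 := congrArg Complex.im h2
    rw [hE, Complex.exp_ofReal_mul_I_im] at h3
    rw [hε] at h3
    rcases Nat.even_or_odd l with hpar | hpar
    · rw [hpar.neg_one_pow] at h3; simp at h3; linarith [h3 ▸ hsinpos]
    · rw [hpar.neg_one_pow] at h3; simp at h3; linarith [h3 ▸ hsinpos]
  -- key scalar identity
  have hEmE : E - E⁻¹ = 2 * Complex.I * Complex.sin ((Real.pi * s : ℝ) : ℂ) := by
    rw [hsinC]
    linear_combination (E - E⁻¹) * Complex.I_sq
  have hprod : (ε + E⁻¹) * (ε * E - 1) = E - E⁻¹ := by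
    linear_combination E * hεε + ε * (mul_inv_cancel₀ hE0)
  have hCval : (C : ℂ) = (Real.pi : ℂ) / ((m : ℂ) * Complex.sin ((Real.pi * s : ℝ) : ℂ)) := by
    rw [hC]
    push_cast [Complex.ofReal_sin]
    rfl
  have hmC : (m:ℂ) ≠ 0 := by exact_mod_cast (ne_of_gt hm0)
  have habs : ∀ S : ℂ, S ≠ 0 → (Real.pi:ℂ)/((m:ℂ)*S) * (2*Complex.I*S)
      = 2*(Real.pi:ℂ)*Complex.I/(m:ℂ) := by
    intro S hS
    field_simp
  have hfrac : (C:ℂ) * (ε + E⁻¹) = 2 * (Real.pi : ℂ) * Complex.I / (m:ℂ) / (ε * E - 1) := by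
    rw [eq_div_iff hεE, mul_assoc, hprod, hEmE, hCval]
    exact habs _ hsinC_ne
  -- exponential splitting
  have hexps : Complex.exp (((α * (θ - Real.pi) : ℝ) : ℂ) * Complex.I)
      = -(Complex.exp (((α * θ : ℝ) : ℂ) * Complex.I) * E⁻¹) := by
    have h1 : ((α * (θ - Real.pi) : ℝ) : ℂ) * Complex.I
        = ((α * θ : ℝ) : ℂ) * Complex.I - ((α * Real.pi : ℝ) : ℂ) * Complex.I := by
      push_cast; ring
    have h2 : Complex.exp (((α * Real.pi : ℝ) : ℂ) * Complex.I) = -E := by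
      have h3 : ((α * Real.pi : ℝ) : ℂ) * Complex.I
          = ((Real.pi * s : ℝ) : ℂ) * Complex.I - (Real.pi : ℂ) * Complex.I := by
        rw [hα]; push_cast; ring
      rw [h3, Complex.exp_sub, Complex.exp_pi_mul_I, hE, div_neg, div_one]
    rw [h1, Complex.exp_sub, h2, div_neg]
    rw [div_eq_mul_inv]
  -- final computation
  rw [hsplit, hIic, hIoi]
  rw [show (((l : ℝ) + 1 - m) / m) = α from by rw [hα, hs]; field_simp]
  rw [hωpow, hmωpow, hexps, hwE]
  linear_combination (((r ^ α : ℝ) : ℂ) * Complex.exp (((α * θ : ℝ) : ℂ) * Complex.I)) * hfrac
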